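/- Let (X, X⁺) be a pre-ordered Banach space and let (j, F) be a free Banach lattice over (X, X⁺). If Bₓ*⁺ is norming for X, i.e. ‖x‖ = sup_{x* ∈ Bₓ*⁺} |x*(x)| for every x ∈ X, then j is isometric: ‖j(x)‖ = ‖x‖ for all x ∈ X. In particular, when X⁺ = {0}, j is isometric. -/

import Mathlib

/-- A wedge in a real vector space. -/
def IsWedge {V : Type} [AddCommGroup V] [Module ℝ V] (C : Set V) : Prop :=
  0 ∈ C ∧ ∀ (a b : ℝ) (x y : V), 0 ≤ a → 0 ≤ b → x ∈ C → y ∈ C → a • x + b • y ∈ C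

/-- The positive part of the dual unit ball of the pre-ordered Banach space `(X, C)`:
continuous linear functionals of norm at most 1 that are nonnegative on `C`. -/
def PosDualBall {X : Type} [NormedAddCommGroup X] [NormedSpace ℝ X] (C : Set X)
    (f : X →L[ℝ] ℝ) : Prop :=
  ‖f‖ ≤ 1 ∧ ∀ x ∈ C, 0 ≤ f x

/-- `(j, F)` is a free Banach lattice over the pre-ordered Banach space `(X, C)`:
`j` is a positive contraction, and every positive contraction from `X` into a Banach
lattice factors uniquely through `j` via a contractive vector lattice homomorphism. -/
def IsFreeBanachLattice (X : Type) [NormedAddCommGroup X] [NormedSpace ℝ X]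
    [CompleteSpace X] (C : Set X)
    (F : Type) [NormedAddCommGroup F] [Lattice F] [HasSolidNorm F] [IsOrderedAddMonoid F] [NormedSpace ℝ F] [CompleteSpace F]
    (j : X →L[ℝ] F) : Prop :=
  ‖j‖ ≤ 1 ∧ (∀ x ∈ C, 0 ≤ j x) ∧
  ∀ (G : Type) [NormedAddCommGroup G] [Lattice G] [HasSolidNorm G] [IsOrderedAddMonoid G] [NormedSpace ℝ G] [CompleteSpace G],
    ∀ φ : X →L[ℝ] G, ‖φ‖ ≤ 1 → (∀ x ∈ C, 0 ≤ φ x) →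
      ∃! ψ : F →L[ℝ] G, ‖ψ‖ ≤ 1 ∧ (∀ a b : F, ψ (a ⊔ b) = ψ a ⊔ ψ b) ∧
        ∀ x : X, ψ (j x) = φ x

/-- For a free Banach lattice `(j, F)` over a pre-ordered Banach space `(X, X⁺)`: if the
positive part of the dual unit ball is norming for `X`, then `j` is isometric; in
particular this is the case when `X⁺ = {0}`. -/
theorem free_banach_lattice_isometric_of_norming
    (X : Type) [NormedAddCommGroup X] [NormedSpace ℝ X] [CompleteSpace X]
    (C : Set X) (hC : IsWedge C)
    (F : Type) [NormedAddCommGroup F] [Lattice F] [HasSolidNorm F] [IsOrderedAddMonoid F] [NormedSpace ℝ F] [CompleteSpace F]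
    (j : X →L[ℝ] F) (hfree : IsFreeBanachLattice X C F j) :
    ((∀ x : X, ‖x‖ = sSup {r : ℝ | ∃ g : X →L[ℝ] ℝ, PosDualBall C g ∧ r = |g x|}) →
      ∀ x : X, ‖j x‖ = ‖x‖) ∧
    (C = {0} → ∀ x : X, ‖j x‖ = ‖x‖) := by
  have main : (∀ x : X, ‖x‖ = sSup {r : ℝ | ∃ g : X →L[ℝ] ℝ, PosDualBall C g ∧ r = |g x|}) →
      ∀ x : X, ‖j x‖ = ‖x‖ := by
    intro hn x
    refine le_antisymm ?_ ?_
    · calc ‖j x‖ ≤ ‖j‖ * ‖x‖ := j.le_opNorm x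
      _ ≤ 1 * ‖x‖ := by
          exact mul_le_mul_of_nonneg_right hfree.1 (norm_nonneg x)
      _ = ‖x‖ := one_mul _
    · rw [hn x]
      apply Real.sSup_le
      · rintro r ⟨g, hg, rfl⟩
        obtain ⟨ψ, ⟨hψn, _, hψj⟩, _⟩ := hfree.2.2 ℝ g hg.1 hg.2
        calc |g x| = ‖ψ (j x)‖ := by rw [hψj x]; exact (Real.norm_eq_abs _).symm
          _ ≤ ‖ψ‖ * ‖j x‖ := ψ.le_opNorm _
          _ ≤ 1 * ‖j x‖ := mul_le_mul_of_nonneg_right hψn (norm_nonneg _)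
          _ = ‖j x‖ := one_mul _
      · exact norm_nonneg _
  refine ⟨main, fun hC0 => main fun x => ?_⟩
  set S : Set ℝ := {r : ℝ | ∃ g : X →L[ℝ] ℝ, PosDualBall C g ∧ r = |g x|} with hS
  have hbdd : BddAbove S := by
    refine ⟨‖x‖, ?_⟩
    rintro r ⟨g, hg, rfl⟩
    calc |g x| = ‖g x‖ := (Real.norm_eq_abs _).symm
      _ ≤ ‖g‖ * ‖x‖ := g.le_opNorm x
      _ ≤ 1 * ‖x‖ := mul_le_mul_of_nonneg_right hg.1 (norm_nonneg _)
      _ = ‖x‖ := one_mul _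
  have hle : sSup S ≤ ‖x‖ := Real.sSup_le (by
      rintro r ⟨g, hg, rfl⟩
      calc |g x| = ‖g x‖ := (Real.norm_eq_abs _).symm
        _ ≤ ‖g‖ * ‖x‖ := g.le_opNorm x
        _ ≤ 1 * ‖x‖ := mul_le_mul_of_nonneg_right hg.1 (norm_nonneg _)
        _ = ‖x‖ := one_mul _) (norm_nonneg _)
  have hge : ‖x‖ ≤ sSup S := by
    rcases eq_or_ne x 0 with rfl | hx
    · have h0 : (0 : ℝ) ∈ S := ⟨0, ⟨by simp, fun y _ => le_of_eq rfl⟩, by simp⟩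
      simpa using le_csSup hbdd h0
    · obtain ⟨g, hg1, hgx⟩ := exists_dual_vector ℝ x (norm_ne_zero_iff.mpr hx)
      have hmem : ‖x‖ ∈ S := by
        refine ⟨g, ⟨le_of_eq hg1, ?_⟩, by rw [hgx]; exact (abs_of_nonneg (norm_nonneg x)).symm⟩
        intro y hy
        rw [hC0, Set.mem_singleton_iff] at hy
        subst hy; simp
      exact le_csSup hbdd hmem
  exact le_antisymm hge hle
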